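/- arXiv:0902.4130 — 5 statements merged into one kernel-verified Lean document; each statement's English description precedes it below -/
import Mathlib

section
/- Let 𝔛 be a Lie algebra over ℝ, let ∇ : 𝔛 × 𝔛 → 𝔛 be an ℝ-bilinear torsion-free connection (i.e. ∇_X Y − ∇_Y X = ⁅X,Y⁆ for all X,Y), and let J : 𝔛 → 𝔛 be an ℝ-linear map with J ∘ J = id. Define Q(X,Y) := (1/4)·[(∇_{JY}J)X + J((∇_Y J)X) + 2·J((∇_X J)Y)] and ∇̃_X Y := ∇_X Y + Q(X,Y). Then the modified connection ∇̃ is almost paracomplex, i.e. ∇̃_X (J Y) = J (∇̃_X Y) for all X, Y ∈ 𝔛 (equivalently, (∇̃_X J)Y = 0). -/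
/-- The covariant derivative of `J` with respect to a connection `op`:
`(∇_X J) Y := ∇_X (J Y) − J (∇_X Y)`. -/
def covDerJ {𝔛 : Type*} [AddCommGroup 𝔛] [Module ℝ 𝔛] (J : 𝔛 →ₗ[ℝ] 𝔛)
    (op : 𝔛 → 𝔛 → 𝔛) : 𝔛 → 𝔛 → 𝔛 :=
  fun X Y => op X (J Y) - J (op X Y)

/-- `Q(X,Y) := (1/4)·[(∇_{JY}J)X + J((∇_Y J)X) + 2·J((∇_X J)Y)]`. -/
noncomputable def Qmap {𝔛 : Type*} [AddCommGroup 𝔛] [Module ℝ 𝔛] (J : 𝔛 →ₗ[ℝ] 𝔛)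
    (op : 𝔛 → 𝔛 → 𝔛) : 𝔛 → 𝔛 → 𝔛 :=
  fun X Y => (1 / 4 : ℝ) •
    (covDerJ J op (J Y) X + J (covDerJ J op Y X) + (2 : ℝ) • J (covDerJ J op X Y))

/-- If `∇` is a torsion-free bilinear connection on the Lie algebra `𝔛` and `J` is an
almost paracomplex structure (`J ∘ J = id`), then the modified connection
`∇̃_X Y := ∇_X Y + Q(X,Y)` is almost paracomplex: `∇̃_X (J Y) = J (∇̃_X Y)`. -/
theorem modified_connection_is_paracomplex
    {𝔛 : Type*} [LieRing 𝔛] [LieAlgebra ℝ 𝔛]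
    (D : 𝔛 →ₗ[ℝ] 𝔛 →ₗ[ℝ] 𝔛) (J : 𝔛 →ₗ[ℝ] 𝔛)
    (hJ : ∀ X : 𝔛, J (J X) = X)
    (hD : ∀ X Y : 𝔛, D X Y - D Y X = ⁅X, Y⁆) :
    ∀ X Y : 𝔛,
      D X (J Y) + Qmap J (fun A B => D A B) X (J Y)
        = J (D X Y + Qmap J (fun A B => D A B) X Y) := by
  intro X Y
  simp only [Qmap, covDerJ, hJ, map_add, map_sub, map_smul, smul_add, smul_sub]
  module
end

section
/- Let 𝔛 be a Lie algebra over ℝ, let ∇ : 𝔛 × 𝔛 → 𝔛 be an ℝ-bilinear torsion-free connection (∇_X Y − ∇_Y X = ⁅X,Y⁆), and let J : 𝔛 → 𝔛 be ℝ-linear with J ∘ J = id. Define Q(X,Y) := (1/4)·[(∇_{JY}J)X + J((∇_Y J)X) + 2·J((∇_X J)Y)] and ∇̃_X Y := ∇_X Y + Q(X,Y). Then the torsion T̃ of ∇̃ satisfies 4·T̃(X,Y) = −N_J(X,Y) for all X, Y ∈ 𝔛, where T̃(X,Y) = ∇̃_X Y − ∇̃_Y X − ⁅X,Y⁆ and N_J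 is the Nijenhuis tensor of J. -/
/-- The Nijenhuis tensor of `J`:
`N_J(X,Y) := ⁅X,Y⁆ − J⁅JX,Y⁆ − J⁅X,JY⁆ + ⁅JX,JY⁆`. -/
def nijenhuis {𝔛 : Type*} [LieRing 𝔛] [LieAlgebra ℝ 𝔛] (J : 𝔛 →ₗ[ℝ] 𝔛) :
    𝔛 → 𝔛 → 𝔛 :=
  fun X Y => ⁅X, Y⁆ - J ⁅J X, Y⁆ - J ⁅X, J Y⁆ + ⁅J X, J Y⁆

/-- If `∇` is a torsion-free bilinear connection on the Lie algebra `𝔛` and `J` satisfies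
`J ∘ J = id`, then the torsion `T̃` of the modified connection `∇̃_X Y := ∇_X Y + Q(X,Y)`
satisfies `4·T̃(X,Y) = −N_J(X,Y)`. -/
theorem four_smul_torsion_eq_neg_nijenhuis
    {𝔛 : Type*} [LieRing 𝔛] [LieAlgebra ℝ 𝔛]
    (D : 𝔛 →ₗ[ℝ] 𝔛 →ₗ[ℝ] 𝔛) (J : 𝔛 →ₗ[ℝ] 𝔛)
    (hJ : ∀ X : 𝔛, J (J X) = X)
    (hD : ∀ X Y : 𝔛, D X Y - D Y X = ⁅X, Y⁆) :
    ∀ X Y : 𝔛,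
      (4 : ℝ) • ((D X Y + Qmap J (fun A B => D A B) X Y)
          - (D Y X + Qmap J (fun A B => D A B) Y X) - ⁅X, Y⁆)
        = -nijenhuis J X Y := by
  intro X Y
  simp only [Qmap, covDerJ, nijenhuis, map_add, map_sub, map_smul, hJ,
    ← hD X Y, ← hD (J X) Y, ← hD X (J Y), ← hD (J X) (J Y), map_sub]
  module
end

section
/- Let 𝔛 be a Lie algebra over ℝ admitting at least one ℝ-bilinear torsion-free connection ∇ (i.e. ∇_X Y − ∇_Y X = ⁅X,Y⁆), and let J : 𝔛 → 𝔛 be ℝ-linear with J ∘ J = id. Then there exists an ℝ-bilinear connection ∇̃ : 𝔛 × 𝔛 → 𝔛 which is almost paracomplex (∇̃_X (J Y) = J (∇̃_X Y) for all X,Y) and whose torsion T̃ satisfies N_J = −4·T̃, where N_J is the Nijenhuis tensor of J. -/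
/-- If the Lie algebra `𝔛` admits a torsion-free bilinear connection and `J` satisfies
`J ∘ J = id`, then there is a bilinear connection `∇̃` which is almost paracomplex
(`∇̃_X (J Y) = J (∇̃_X Y)`) and whose torsion `T̃` satisfies `N_J = −4·T̃`. -/
theorem exists_paracomplex_connection_with_torsion
    {𝔛 : Type*} [LieRing 𝔛] [LieAlgebra ℝ 𝔛]
    (D : 𝔛 →ₗ[ℝ] 𝔛 →ₗ[ℝ] 𝔛)
    (hD : ∀ X Y : 𝔛, D X Y - D Y X = ⁅X, Y⁆)
    (J : 𝔛 →ₗ[ℝ] 𝔛) (hJ : ∀ X : 𝔛, J (J X) = X) :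
    ∃ D' : 𝔛 →ₗ[ℝ] 𝔛 →ₗ[ℝ] 𝔛,
      (∀ X Y : 𝔛, D' X (J Y) = J (D' X Y)) ∧
      (∀ X Y : 𝔛, nijenhuis J X Y = (-4 : ℝ) • (D' X Y - D' Y X - ⁅X, Y⁆)) := by
  refine ⟨LinearMap.mk₂ ℝ
      (fun X Y => (4⁻¹ : ℝ) • (D X Y + J (D X (J Y)) + J (D (J X) Y) + D (J X) (J Y)
          + ⁅X, Y⁆ + J ⁅X, J Y⁆ - J ⁅J X, Y⁆ - ⁅J X, J Y⁆))
      ?_ ?_ ?_ ?_, ?_, ?_⟩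
  · intro X X' Y
    simp only [map_add, LinearMap.add_apply, add_lie, lie_add, smul_add]
    rw [← smul_add]
    congr 1
    abel
  · intro c X Y
    simp only [map_smul, LinearMap.smul_apply, smul_lie, lie_smul, ← smul_add, ← smul_sub]
    rw [smul_comm]
  · intro X Y Y'
    simp only [map_add, lie_add, smul_add]
    rw [← smul_add]
    congr 1
    abel
  · intro c X Y
    simp only [map_smul, lie_smul, ← smul_add, ← smul_sub]
    rw [smul_comm]
  · intro X Y
    simp only [LinearMap.mk₂_apply, map_smul, map_add, map_sub, hJ]
    congr 1
    abel
  · intro X Y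
    have h1 : D Y X = D X Y - ⁅X, Y⁆ := by rw [← hD X Y]; abel
    have h2 : D Y (J X) = D (J X) Y - ⁅J X, Y⁆ := by rw [← hD (J X) Y]; abel
    have h3 : D (J Y) X = D X (J Y) - ⁅X, J Y⁆ := by rw [← hD X (J Y)]; abel
    have h4 : D (J Y) (J X) = D (J X) (J Y) - ⁅J X, J Y⁆ := by rw [← hD (J X) (J Y)]; abel
    have s1 : ⁅Y, X⁆ = -⁅X, Y⁆ := by rw [← lie_skew]
    have s2 : ⁅Y, J X⁆ = -⁅J X, Y⁆ := by rw [← lie_skew]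
    have s3 : ⁅J Y, X⁆ = -⁅X, J Y⁆ := by rw [← lie_skew]
    have s4 : ⁅J Y, J X⁆ = -⁅J X, J Y⁆ := by rw [← lie_skew]
    simp only [nijenhuis, LinearMap.mk₂_apply, h1, h2, h3, h4, s1, s2, s3, s4,
      map_sub, map_add, map_neg, hJ]
    module
end

section
/- Let 𝔛 be a Lie algebra over ℝ admitting at least one ℝ-bilinear torsion-free connection ∇ (∇_X Y − ∇_Y X = ⁅X,Y⁆), and let J : 𝔛 → 𝔛 be ℝ-linear with J ∘ J = id whose Nijenhuis tensor vanishes identically (N_J(X,Y) = 0 for all X,Y). Then there exists an ℝ-bilinear connection ∇̃ : 𝔛 × 𝔛 → 𝔛 which is both torsion-free (∇̃_X Y − ∇̃_Y X = ⁅X,Y⁆) and paracomplex, i.e. ∇̃_X (J Y) = J (∇̃_X Y) for all X, Y ∈ 𝔛. -/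
/-- If the Lie algebra `𝔛` admits a torsion-free bilinear connection and `J` is an
almost paracomplex structure (`J ∘ J = id`) whose Nijenhuis tensor vanishes identically,
then there exists a bilinear connection `∇̃` which is torsion-free and paracomplex,
i.e. `∇̃_X (J Y) = J (∇̃_X Y)` for all `X, Y`. -/
theorem exists_torsionFree_paracomplex_connection
    {𝔛 : Type*} [LieRing 𝔛] [LieAlgebra ℝ 𝔛]
    (D : 𝔛 →ₗ[ℝ] 𝔛 →ₗ[ℝ] 𝔛)
    (hD : ∀ X Y : 𝔛, D X Y - D Y X = ⁅X, Y⁆)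
    (J : 𝔛 →ₗ[ℝ] 𝔛) (hJ : ∀ X : 𝔛, J (J X) = X)
    (hN : ∀ X Y : 𝔛, nijenhuis J X Y = 0) :
    ∃ D' : 𝔛 →ₗ[ℝ] 𝔛 →ₗ[ℝ] 𝔛,
      (∀ X Y : 𝔛, D' X Y - D' Y X = ⁅X, Y⁆) ∧
      (∀ X Y : 𝔛, D' X (J Y) = J (D' X Y)) := by
  refine ⟨LinearMap.mk₂ ℝ
    (fun X Y => D X Y
      + (3/8 : ℝ) • (J (D X (J Y)) - D X Y + J (D Y (J X)) - D Y X)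
      + (1/8 : ℝ) • (D (J X) (J Y) - J (D (J X) Y) + D (J Y) (J X) - J (D (J Y) X)))
    (fun X X' Y => by simp only [map_add, LinearMap.add_apply]; module)
    (fun c X Y => by simp only [map_smul, LinearMap.smul_apply]; module)
    (fun X Y Y' => by simp only [map_add, LinearMap.add_apply]; module)
    (fun c X Y => by simp only [map_smul, LinearMap.smul_apply]; module), ?_, ?_⟩
  · intro X Y
    simp only [LinearMap.mk₂_apply]
    rw [← hD X Y]
    module
  · intro X Y
    have h := hN X Y
    unfold nijenhuis at h
    rw [← hD X Y, ← hD (J X) Y, ← hD X (J Y), ← hD (J X) (J Y)] at h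
    have h2 := congrArg J h
    simp only [LinearMap.mk₂_apply, map_sub, map_add, map_smul, map_zero, hJ] at h2 ⊢
    linear_combination (norm := module) (-(4:ℝ)⁻¹) • h2
end

section
/- Let 𝔛 be an ℝ-vector space, ∇ : 𝔛 × 𝔛 → 𝔛 an ℝ-bilinear map, and J : 𝔛 → 𝔛 an ℝ-linear map with J ∘ J = id. Define Q(X,Y) := (1/4)·[(∇_{JY}J)X + J((∇_Y J)X) + 2·J((∇_X J)Y)], where (∇_X J)Y := ∇_X(JY) − J(∇_X Y). Then for all X, Y ∈ 𝔛, Q(X, JY) − J(Q(X,Y)) = −(∇_X J)Y. -/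
/-- For `Q(X,Y) := (1/4)·[(∇_{JY}J)X + J((∇_Y J)X) + 2·J((∇_X J)Y)]` one has
`Q(X, JY) − J(Q(X,Y)) = −(∇_X J)Y`. -/
theorem Qmap_J_sub_J_Qmap
    {𝔛 : Type*} [AddCommGroup 𝔛] [Module ℝ 𝔛]
    (D : 𝔛 →ₗ[ℝ] 𝔛 →ₗ[ℝ] 𝔛) (J : 𝔛 →ₗ[ℝ] 𝔛)
    (hJ : ∀ X : 𝔛, J (J X) = X) :
    ∀ X Y : 𝔛,
      Qmap J (fun A B => D A B) X (J Y) - J (Qmap J (fun A B => D A B) X Y)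
        = -covDerJ J (fun A B => D A B) X Y := by
  intro X Y
  simp only [Qmap, covDerJ, map_sub, map_add, map_smul, hJ]
  module
end
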